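/- Every path of length 2 in the Coxeter graph Γ (i.e., every 2-path u–v–w with u,w distinct neighbors of v) is contained in exactly two of the 7-cycles of Γ. -/

import Mathlib

/-- Vertex set of the Coxeter graph: four concentric 7-tuples `u, v, t, z`. -/
abbrev CoxeterVertex := Fin 4 × ZMod 7

/-- Base (asymmetric) adjacency relation for the Coxeter graph:
`u_x ~ u_{x+1}`, `v_x ~ v_{x+2}`, `t_x ~ t_{x+3}`, and `z_x ~ u_x, v_x, t_x`. -/
def coxeterRel : CoxeterVertex → CoxeterVertex → Prop := fun p q =>
  (p.1 = 0 ∧ q.1 = 0 ∧ q.2 = p.2 + 1) ∨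
  (p.1 = 1 ∧ q.1 = 1 ∧ q.2 = p.2 + 2) ∨
  (p.1 = 2 ∧ q.1 = 2 ∧ q.2 = p.2 + 3) ∨
  (p.1 = 3 ∧ (q.1 = 0 ∨ q.1 = 1 ∨ q.1 = 2) ∧ q.2 = p.2)

/-- The Coxeter graph on 28 vertices. -/
def coxeterGraph : SimpleGraph CoxeterVertex := SimpleGraph.fromRel coxeterRel

/-- A 7-cycle of a graph `G` is a subgraph of `G` isomorphic to the cycle graph
on 7 vertices. -/
def IsSevenCycle {V : Type*} {G : SimpleGraph V} (H : G.Subgraph) : Prop :=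
  Nonempty (H.coe ≃g SimpleGraph.cycleGraph 7)

open SimpleGraph

instance : DecidableRel coxeterRel := fun p q => by unfold coxeterRel; infer_instance

instance : DecidableRel coxeterGraph.Adj := fun a b =>
  decidable_of_iff (a ≠ b ∧ (coxeterRel a b ∨ coxeterRel b a)) Iff.rfl

/-- Explicit neighbour finsets of the Coxeter graph. -/
def nbrs (p : CoxeterVertex) : Finset CoxeterVertex :=
  if p.1 = 0 then {(0, p.2+1), (0, p.2-1), (3, p.2)}
  else if p.1 = 1 then {(1, p.2+2), (1, p.2-2), (3, p.2)}
  else if p.1 = 2 then {(2, p.2+3), (2, p.2-3), (3, p.2)}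
  else {(0, p.2), (1, p.2), (2, p.2)}

lemma mem_nbrs : ∀ p q : CoxeterVertex, q ∈ nbrs p ↔ coxeterGraph.Adj p q := by decide

/-- Candidate continuations `(a, b, c, d)` closing a 7-cycle `u v w a b c d`. -/
def S (u v w : CoxeterVertex) :
    Finset (CoxeterVertex × CoxeterVertex × CoxeterVertex × CoxeterVertex) :=
  ((nbrs w).filter (fun a => a ≠ u ∧ a ≠ v)).biUnion fun a =>
  ((nbrs a).filter (fun b => b ≠ u ∧ b ≠ v ∧ b ≠ w)).biUnion fun b =>
  ((nbrs b).filter (fun c => c ≠ u ∧ c ≠ v ∧ c ≠ w ∧ c ≠ a)).biUnion fun c =>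
  ((nbrs c).filter (fun d => d ≠ v ∧ d ≠ w ∧ d ≠ a ∧ d ≠ b ∧ u ∈ nbrs d)).image fun d => (a, b, c, d)

lemma mem_S {u v w a b c d : CoxeterVertex} :
    (a, b, c, d) ∈ S u v w ↔
      (coxeterGraph.Adj w a ∧ a ≠ u ∧ a ≠ v) ∧
      (coxeterGraph.Adj a b ∧ b ≠ u ∧ b ≠ v ∧ b ≠ w) ∧
      (coxeterGraph.Adj b c ∧ c ≠ u ∧ c ≠ v ∧ c ≠ w ∧ c ≠ a) ∧
      (coxeterGraph.Adj c d ∧ d ≠ v ∧ d ≠ w ∧ d ≠ a ∧ d ≠ b ∧ coxeterGraph.Adj d u) := by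
  simp only [S, Finset.mem_biUnion, Finset.mem_filter, Finset.mem_image, mem_nbrs, Prod.mk.injEq]
  constructor
  · rintro ⟨a', ⟨ha1, ha2, ha3⟩, b', ⟨hb1, hb2, hb3, hb4⟩, c', ⟨hc1, hc2, hc3, hc4, hc5⟩,
      d', ⟨hd1, hd2, hd3, hd4, hd5, hd6⟩, rfl, rfl, rfl, rfl⟩
    exact ⟨⟨ha1, ha2, ha3⟩, ⟨hb1, hb2, hb3, hb4⟩, ⟨hc1, hc2, hc3, hc4, hc5⟩,
      ⟨hd1, hd2, hd3, hd4, hd5, hd6⟩⟩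
  · rintro ⟨⟨ha1, ha2, ha3⟩, ⟨hb1, hb2, hb3, hb4⟩, ⟨hc1, hc2, hc3, hc4, hc5⟩,
      ⟨hd1, hd2, hd3, hd4, hd5, hd6⟩⟩
    exact ⟨a, ⟨ha1, ha2, ha3⟩, b, ⟨hb1, hb2, hb3, hb4⟩, c, ⟨hc1, hc2, hc3, hc4, hc5⟩,
      d, ⟨hd1, hd2, hd3, hd4, hd5, hd6⟩, rfl, rfl, rfl, rfl⟩

set_option maxHeartbeats 2000000 in
lemma card_S : ∀ v : CoxeterVertex, ∀ u ∈ nbrs v, ∀ w ∈ nbrs v, u ≠ w →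
    (S u v w).card = 2 := by decide

/-- The cycle-shaped subgraph spanned by a 7-periodic sequence of vertices. -/
def cyc (g : ZMod 7 → CoxeterVertex) : coxeterGraph.Subgraph where
  verts := Set.range g
  Adj a b := coxeterGraph.Adj a b ∧
    ∃ i : ZMod 7, (a = g i ∧ b = g (i + 1)) ∨ (b = g i ∧ a = g (i + 1))
  adj_sub h := h.1
  edge_vert := by rintro a b ⟨-, i, (⟨rfl, -⟩ | ⟨-, rfl⟩)⟩ <;> exact ⟨_, rfl⟩
  symm := ⟨by rintro a b ⟨h, i, h2⟩; exact ⟨h.symm, i, h2.symm⟩⟩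

lemma hZ7 : ∀ i : ZMod 7, i = 0 ∨ i = 1 ∨ i = 2 ∨ i = 3 ∨ i = 4 ∨ i = 5 ∨ i = 6 := by decide

lemma zmod_fin_iff : ∀ i j : ZMod 7,
    (j = i + 1 ∨ i = j + 1) ↔ ((i : Fin 7) - j = 1 ∨ (j : Fin 7) - i = 1) := by decide

lemma cg_adj_succ : ∀ i : Fin 7, (SimpleGraph.cycleGraph 7).Adj i (i + 1) := by decide

lemma cyc_isSevenCycle {g : ZMod 7 → CoxeterVertex} (inj : Function.Injective g)
    (hadj : ∀ i, coxeterGraph.Adj (g i) (g (i + 1))) : IsSevenCycle (cyc g) := by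
  refine ⟨?_⟩
  refine (RelIso.symm ⟨Equiv.ofInjective g inj, ?_⟩)
  intro i j
  simp only [Subgraph.coe_adj, Equiv.ofInjective_apply]
  show (cyc g).Adj (g i) (g j) ↔ (cycleGraph 7).Adj i j
  rw [cycleGraph_adj (n := 5)]; refine Iff.trans ?_ (zmod_fin_iff i j)
  constructor
  · rintro ⟨-, k, (⟨ha, hb⟩ | ⟨ha, hb⟩)⟩
    · left; rw [inj ha, inj hb]
    · right; rw [inj ha, inj hb]
  · rintro (rfl | rfl)
    · exact ⟨hadj i, i, Or.inl ⟨rfl, rfl⟩⟩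
    · exact ⟨(hadj j).symm, j, Or.inr ⟨rfl, rfl⟩⟩

lemma cyc_adj_right {g : ZMod 7 → CoxeterVertex} (inj : Function.Injective g) {a : CoxeterVertex}
    {i : ZMod 7} (h : (cyc g).Adj a (g i)) : a = g (i - 1) ∨ a = g (i + 1) := by
  obtain ⟨-, j, (⟨ha, hb⟩ | ⟨hb, ha⟩)⟩ := h
  · left; rw [ha, inj hb]; congr 1; ring
  · right; rw [ha, inj hb]

lemma exists_g {H : coxeterGraph.Subgraph} (h : IsSevenCycle H) :
    ∃ g : ZMod 7 → CoxeterVertex, Function.Injective g ∧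
      (∀ i, coxeterGraph.Adj (g i) (g (i + 1))) ∧ H = cyc g := by
  obtain ⟨e⟩ := h
  set f : ZMod 7 → CoxeterVertex := fun i => (e.symm i : CoxeterVertex) with hf
  have hinj : Function.Injective f := fun i j hij => e.symm.injective (Subtype.val_injective hij)
  have hHadj : ∀ i : ZMod 7, H.Adj (f i) (f (i + 1)) := by
    intro i
    exact e.symm.map_rel_iff.mpr (cg_adj_succ i)
  have hval : ∀ x : H.verts, f (e x) = x := by
    intro x; simp [hf]
  have hGadj : ∀ i : ZMod 7, coxeterGraph.Adj (f i) (f (i + 1)) := fun i => H.adj_sub (hHadj i)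
  refine ⟨f, hinj, hGadj, ?_⟩
  ext a b
  · constructor
    · intro ha
      refine ⟨e ⟨a, ha⟩, ?_⟩
      exact (hval ⟨a, ha⟩)
    · rintro ⟨i, rfl⟩
      exact (e.symm i).2
  · constructor
    · intro hab
      have ha : a ∈ H.verts := H.edge_vert hab
      have hb : b ∈ H.verts := H.edge_vert hab.symm
      refine ⟨H.adj_sub hab, ?_⟩
      have hcyc : (SimpleGraph.cycleGraph 7).Adj (e ⟨a, ha⟩) (e ⟨b, hb⟩) := by
        rw [e.map_rel_iff]
        exact hab
      rw [SimpleGraph.cycleGraph_adj (n := 5)] at hcyc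
      set i := e ⟨a, ha⟩ with hi
      set j := e ⟨b, hb⟩ with hj
      have hji : j = i + 1 ∨ i = j + 1 := (zmod_fin_iff i j).mpr (by tauto)
      rcases hji with hji | hji
      · refine ⟨i, Or.inl ⟨?_, ?_⟩⟩
        · exact (hval ⟨a, ha⟩).symm
        · refine Eq.trans (hval ⟨b, hb⟩).symm (congrArg f ?_); exact hji
      · refine ⟨j, Or.inr ⟨?_, ?_⟩⟩
        · exact (hval ⟨b, hb⟩).symm
        · refine Eq.trans (hval ⟨a, ha⟩).symm (congrArg f ?_); exact hji
    · rintro ⟨-, i, (⟨rfl, rfl⟩ | ⟨rfl, rfl⟩)⟩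
      · exact hHadj i
      · exact (hHadj i).symm

lemma cyc_translate (g : ZMod 7 → CoxeterVertex) (c : ZMod 7) :
    cyc (fun j => g (c + j)) = cyc g := by
  ext a b
  · constructor
    · rintro ⟨j, rfl⟩; exact ⟨c + j, rfl⟩
    · rintro ⟨i, rfl⟩; exact ⟨i - c, congrArg g (by ring)⟩
  · constructor
    · rintro ⟨hG, i, (⟨rfl, rfl⟩ | ⟨rfl, rfl⟩)⟩
      · exact ⟨hG, c + i, Or.inl ⟨rfl, congrArg g (by ring)⟩⟩
      · exact ⟨hG, c + i, Or.inr ⟨rfl, congrArg g (by ring)⟩⟩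
    · rintro ⟨hG, i, (⟨rfl, rfl⟩ | ⟨rfl, rfl⟩)⟩
      · exact ⟨hG, i - c, Or.inl ⟨congrArg g (by ring), congrArg g (by ring)⟩⟩
      · exact ⟨hG, i - c, Or.inr ⟨congrArg g (by ring), congrArg g (by ring)⟩⟩

lemma cyc_reflect (g : ZMod 7 → CoxeterVertex) (c : ZMod 7) :
    cyc (fun j => g (c - j)) = cyc g := by
  ext a b
  · constructor
    · rintro ⟨j, rfl⟩; exact ⟨c - j, rfl⟩
    · rintro ⟨i, rfl⟩; exact ⟨c - i, congrArg g (by ring)⟩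
  · constructor
    · rintro ⟨hG, i, (⟨rfl, rfl⟩ | ⟨rfl, rfl⟩)⟩
      · exact ⟨hG, c - i - 1, Or.inr ⟨congrArg g (by ring), congrArg g (by ring)⟩⟩
      · exact ⟨hG, c - i - 1, Or.inl ⟨congrArg g (by ring), congrArg g (by ring)⟩⟩
    · rintro ⟨hG, i, (⟨rfl, rfl⟩ | ⟨rfl, rfl⟩)⟩
      · exact ⟨hG, c - i - 1, Or.inr ⟨congrArg g (by ring), congrArg g (by ring)⟩⟩
      · exact ⟨hG, c - i - 1, Or.inl ⟨congrArg g (by ring), congrArg g (by ring)⟩⟩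

lemma exists_g_norm {H : coxeterGraph.Subgraph} (h : IsSevenCycle H)
    {u v w : CoxeterVertex} (h1 : H.Adj u v) (h2 : H.Adj v w) (huw : u ≠ w) :
    ∃ g : ZMod 7 → CoxeterVertex, Function.Injective g ∧
      (∀ i, coxeterGraph.Adj (g i) (g (i + 1))) ∧ H = cyc g ∧
      g 0 = u ∧ g 1 = v ∧ g 2 = w := by
  obtain ⟨f, hinj, hadj, rfl⟩ := exists_g h
  obtain ⟨-, i, hi⟩ := h1
  obtain ⟨-, j, hj⟩ := h2
  have hv : ∃ k : ZMod 7, v = f k ∧ (u = f (k - 1) ∨ u = f (k + 1)) := by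
    rcases hi with ⟨hu, hv⟩ | ⟨hv, hu⟩
    · exact ⟨i + 1, hv, Or.inl (by rw [hu]; exact congrArg f (by ring))⟩
    · exact ⟨i, hv, Or.inr hu⟩
  obtain ⟨k, hvk, hu⟩ := hv
  have hw : w = f (k - 1) ∨ w = f (k + 1) := by
    rcases hj with ⟨hv', hw⟩ | ⟨hw, hv'⟩
    · have : j = k := hinj (hv'.symm.trans hvk)
      subst this; exact Or.inr hw
    · have : j + 1 = k := hinj (hv'.symm.trans hvk)
      rw [← this]; exact Or.inl (by rw [hw]; exact congrArg f (by ring))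
  rcases hu with hu | hu <;> rcases hw with hw | hw
  · exact absurd (hu.trans hw.symm) huw
  · refine ⟨fun j => f (k - 1 + j), ?_, ?_, (cyc_translate f (k - 1)).symm, ?_, ?_, ?_⟩
    · intro a b hab
      have h' := hinj hab
      linear_combination h'
    · intro i
      show coxeterGraph.Adj (f (k - 1 + i)) (f (k - 1 + (i + 1)))
      rw [show k - 1 + (i + 1) = (k - 1 + i) + 1 from by ring]
      exact hadj _
    · rw [hu]; exact congrArg f (by ring)
    · rw [hvk]; exact congrArg f (by ring)
    · rw [hw]; exact congrArg f (by ring)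
  · refine ⟨fun j => f (k + 1 - j), ?_, ?_, (cyc_reflect f (k + 1)).symm, ?_, ?_, ?_⟩
    · intro a b hab
      have h' := hinj hab
      linear_combination -h'
    · intro i
      show coxeterGraph.Adj (f (k + 1 - i)) (f (k + 1 - (i + 1)))
      rw [show k + 1 - i = (k - i) + 1 from by ring, show k + 1 - (i + 1) = k - i from by ring]
      exact (hadj (k - i)).symm
    · rw [hu]; exact congrArg f (by ring)
    · rw [hvk]; exact congrArg f (by ring)
    · rw [hw]; exact congrArg f (by ring)
  · exact absurd (hu.trans hw.symm) huw

/-- The interpolating 7-periodic sequence through seven prescribed values. -/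
def gFun (u v w a b c d : CoxeterVertex) (i : ZMod 7) : CoxeterVertex :=
  if i = 0 then u else if i = 1 then v else if i = 2 then w
  else if i = 3 then a else if i = 4 then b else if i = 5 then c else d

lemma inj7 {g : ZMod 7 → CoxeterVertex}
    (h01 : g 0 ≠ g 1) (h02 : g 0 ≠ g 2) (h03 : g 0 ≠ g 3) (h04 : g 0 ≠ g 4)
    (h05 : g 0 ≠ g 5) (h06 : g 0 ≠ g 6)
    (h12 : g 1 ≠ g 2) (h13 : g 1 ≠ g 3) (h14 : g 1 ≠ g 4) (h15 : g 1 ≠ g 5) (h16 : g 1 ≠ g 6)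
    (h23 : g 2 ≠ g 3) (h24 : g 2 ≠ g 4) (h25 : g 2 ≠ g 5) (h26 : g 2 ≠ g 6)
    (h34 : g 3 ≠ g 4) (h35 : g 3 ≠ g 5) (h36 : g 3 ≠ g 6)
    (h45 : g 4 ≠ g 5) (h46 : g 4 ≠ g 6) (h56 : g 5 ≠ g 6) : Function.Injective g := by
  intro i j hij
  rcases hZ7 i with rfl|rfl|rfl|rfl|rfl|rfl|rfl <;> rcases hZ7 j with rfl|rfl|rfl|rfl|rfl|rfl|rfl <;>
    first | rfl | exact absurd hij (by assumption) | exact absurd hij.symm (by assumption)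

lemma S_good {u v w a b c d : CoxeterVertex} (huv : coxeterGraph.Adj u v)
    (hvw : coxeterGraph.Adj v w) (huw : u ≠ w) (h : (a, b, c, d) ∈ S u v w) :
    Function.Injective (gFun u v w a b c d) ∧
      ∀ i, coxeterGraph.Adj (gFun u v w a b c d i) (gFun u v w a b c d (i + 1)) := by
  rw [mem_S] at h
  obtain ⟨⟨ha1, ha2, ha3⟩, ⟨hb1, hb2, hb3, hb4⟩, ⟨hc1, hc2, hc3, hc4, hc5⟩,
    ⟨hd1, hd2, hd3, hd4, hd5, hd6⟩⟩ := h
  constructor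
  · exact inj7 huv.ne huw (Ne.symm ha2) (Ne.symm hb2) (Ne.symm hc2) (Ne.symm hd6.ne)
      hvw.ne (Ne.symm ha3) (Ne.symm hb3) (Ne.symm hc3) (Ne.symm hd2)
      ha1.ne (Ne.symm hb4) (Ne.symm hc4) (Ne.symm hd3)
      hb1.ne (Ne.symm hc5) (Ne.symm hd4)
      hc1.ne (Ne.symm hd5) hd1.ne
  · intro i
    rcases hZ7 i with rfl|rfl|rfl|rfl|rfl|rfl|rfl
    exacts [huv, hvw, ha1, hb1, hc1, hd1, hd6]

theorem coxeterGraph_two_path_in_exactly_two_sevenCycles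
    (u v w : CoxeterVertex) (huv : coxeterGraph.Adj u v) (hvw : coxeterGraph.Adj v w)
    (huw : u ≠ w) :
    {H : coxeterGraph.Subgraph | IsSevenCycle H ∧ H.Adj u v ∧ H.Adj v w}.ncard = 2 := by
  classical
  have hset : {H : coxeterGraph.Subgraph | IsSevenCycle H ∧ H.Adj u v ∧ H.Adj v w}
      = ↑((S u v w).image fun t => cyc (gFun u v w t.1 t.2.1 t.2.2.1 t.2.2.2)) := by
    ext H
    simp only [Set.mem_setOf_eq, Finset.coe_image, Set.mem_image, Finset.mem_coe]
    constructor
    · rintro ⟨h7, h1, h2⟩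
      obtain ⟨g, hinj, hadj, rfl, hg0, hg1, hg2⟩ := exists_g_norm h7 h1 h2 huw
      refine ⟨(g 3, g 4, g 5, g 6), ?_, ?_⟩
      · rw [mem_S, ← hg0, ← hg1, ← hg2]
        refine ⟨⟨hadj 2, hinj.ne (by decide), hinj.ne (by decide)⟩,
          ⟨hadj 3, hinj.ne (by decide), hinj.ne (by decide), hinj.ne (by decide)⟩,
          ⟨hadj 4, hinj.ne (by decide), hinj.ne (by decide), hinj.ne (by decide),
            hinj.ne (by decide)⟩,
          ⟨hadj 5, hinj.ne (by decide), hinj.ne (by decide), hinj.ne (by decide),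
            hinj.ne (by decide), hadj 6⟩⟩
      · show cyc (gFun u v w (g 3) (g 4) (g 5) (g 6)) = cyc g
        congr 1
        funext i
        rcases hZ7 i with rfl|rfl|rfl|rfl|rfl|rfl|rfl
        exacts [hg0.symm, hg1.symm, hg2.symm, rfl, rfl, rfl, rfl]
    · rintro ⟨⟨a, b, c, d⟩, hmem, rfl⟩
      obtain ⟨hinj, hadj⟩ := S_good huv hvw huw hmem
      exact ⟨cyc_isSevenCycle hinj hadj,
        ⟨huv, 0, Or.inl ⟨rfl, rfl⟩⟩, ⟨hvw, 1, Or.inl ⟨rfl, rfl⟩⟩⟩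
  rw [hset, Set.ncard_coe_finset]
  have hinjOn : Set.InjOn (fun t : CoxeterVertex × CoxeterVertex × CoxeterVertex × CoxeterVertex =>
      cyc (gFun u v w t.1 t.2.1 t.2.2.1 t.2.2.2)) (S u v w) := by
    rintro ⟨a, b, c, d⟩ ht ⟨a', b', c', d'⟩ ht' hF
    have hFt : cyc (gFun u v w a b c d) = cyc (gFun u v w a' b' c' d') := hF
    obtain ⟨hinj, hadj⟩ := S_good huv hvw huw ht
    rw [Finset.mem_coe, mem_S] at ht'
    obtain ⟨⟨ha1', ha2', ha3'⟩, ⟨hb1', hb2', hb3', hb4'⟩, ⟨hc1', hc2', hc3', hc4', hc5'⟩,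
      ⟨hd1', hd2', hd3', hd4', hd5', hd6'⟩⟩ := ht'
    have hA : a' = a := by
      have hAdj : (cyc (gFun u v w a' b' c' d')).Adj a' w :=
        ⟨ha1'.symm, 2, Or.inr ⟨rfl, rfl⟩⟩
      rw [← hFt] at hAdj
      rcases cyc_adj_right hinj (i := 2) hAdj with h | h
      · exact absurd h ha3'
      · exact h
    subst hA
    have hB : b' = b := by
      have hAdj : (cyc (gFun u v w a' b' c' d')).Adj b' a' :=
        ⟨hb1'.symm, 3, Or.inr ⟨rfl, rfl⟩⟩
      rw [← hFt] at hAdj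
      rcases cyc_adj_right hinj (i := 3) hAdj with h | h
      · exact absurd h hb4'
      · exact h
    subst hB
    have hC : c' = c := by
      have hAdj : (cyc (gFun u v w a' b' c' d')).Adj c' b' :=
        ⟨hc1'.symm, 4, Or.inr ⟨rfl, rfl⟩⟩
      rw [← hFt] at hAdj
      rcases cyc_adj_right hinj (i := 4) hAdj with h | h
      · exact absurd h hc5'
      · exact h
    subst hC
    have hD : d' = d := by
      have hAdj : (cyc (gFun u v w a' b' c' d')).Adj d' c' :=
        ⟨hd1'.symm, 5, Or.inr ⟨rfl, rfl⟩⟩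
      rw [← hFt] at hAdj
      rcases cyc_adj_right hinj (i := 5) hAdj with h | h
      · exact absurd h hd5'
      · exact h
    subst hD
    rfl
  rw [Finset.card_image_of_injOn hinjOn]
  exact card_S v u ((mem_nbrs v u).mpr huv.symm) w ((mem_nbrs v w).mpr hvw) huw
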